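/- arXiv:1104.4135 — 2 statements merged into one kernel-verified Lean document; each statement's English description precedes it below -/
import Mathlib

section
/- Under assumptions (A1) and (A2), for every ε > 0 and all sufficiently large n, the type I error of the test Φ_n satisfies E_{β_n^0}(Φ_n) ≤ exp(−ε² n Λ_min² / (16σ²)), where the expectation is under y_n ~ N(X_n β_n^0, σ² I_n). -/
open MeasureTheory ProbabilityTheory Filter

/-- Euclidean norm on `Fin k → ℝ`. -/
noncomputable def enorm' {k : ℕ} (v : Fin k → ℝ) : ℝ := Real.sqrt (∑ i, v i ^ 2)

/-- The multivariate normal distribution `N(m, v I)` on `Fin k → ℝ`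
(product of one-dimensional Gaussians with means `m i` and common variance `v`). -/
noncomputable def normalVec {k : ℕ} (m : Fin k → ℝ) (v : NNReal) : Measure (Fin k → ℝ) :=
  Measure.pi fun i => gaussianReal (m i) v

/-- Least squares estimator. -/
noncomputable def betaHat {n k : ℕ} (X : Matrix (Fin n) (Fin k) ℝ) (y : Fin n → ℝ) :
    Fin k → ℝ := (X.transpose * X)⁻¹.mulVec (X.transpose.mulVec y)

/-- Smallest singular value of `X`: infimum of `‖X v‖` over Euclidean-unit vectors `v`. -/
noncomputable def sMin {n k : ℕ} (X : Matrix (Fin n) (Fin k) ℝ) : ℝ :=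
  sInf ((fun v => enorm' (X.mulVec v)) '' {v | enorm' v = 1})

/-- Largest singular value of `X`: supremum of `‖X v‖` over Euclidean-unit vectors `v`. -/
noncomputable def sMax {n k : ℕ} (X : Matrix (Fin n) (Fin k) ℝ) : ℝ :=
  sSup ((fun v => enorm' (X.mulVec v)) '' {v | enorm' v = 1})

open Matrix Real

/-- Tonelli for finite products over `Fin n`, Lebesgue version. -/
theorem lintegral_pi_fin {n : ℕ} (f : Fin n → ℝ → ENNReal) (hf : ∀ i, Measurable (f i)) :
    ∫⁻ x : Fin n → ℝ, ∏ i, f i (x i) ∂(Measure.pi fun _ => (volume : Measure ℝ))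
      = ∏ i, ∫⁻ x, f i x := by
  induction n with
  | zero => simp
  | succ n ih =>
      have hmp := measurePreserving_piFinSuccAbove
        (fun _ : Fin (n+1) => (volume : Measure ℝ)) 0
      have hG : Measurable fun z : ℝ × (Fin n → ℝ) =>
          f 0 z.1 * ∏ j, f (Fin.succ j) (z.2 j) :=
        ((hf 0).comp measurable_fst).mul <|
          (Finset.measurable_prod _ fun j _ =>
            (hf _).comp (measurable_pi_apply j)).comp measurable_snd
      have key : ∀ x : Fin (n+1) → ℝ,
          (∏ i, f i (x i))
            = f 0 ((MeasurableEquiv.piFinSuccAbove (fun _ => ℝ) 0) x).1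
              * ∏ j, f (Fin.succ j) (((MeasurableEquiv.piFinSuccAbove (fun _ => ℝ) 0) x).2 j) := by
        intro x
        rw [Fin.prod_univ_succ]
        simp [MeasurableEquiv.piFinSuccAbove, Fin.zero_succAbove, Fin.tail]
      calc ∫⁻ x : Fin (n+1) → ℝ, ∏ i, f i (x i) ∂(Measure.pi fun _ => (volume : Measure ℝ))
          = ∫⁻ x, (fun z : ℝ × (Fin n → ℝ) => f 0 z.1 * ∏ j, f (Fin.succ j) (z.2 j))
              ((MeasurableEquiv.piFinSuccAbove (fun _ => ℝ) 0) x)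
              ∂(Measure.pi fun _ => (volume : Measure ℝ)) := by
            exact lintegral_congr fun x => key x
        _ = ∫⁻ z : ℝ × (Fin n → ℝ), f 0 z.1 * ∏ j, f (Fin.succ j) (z.2 j)
              ∂((volume : Measure ℝ).prod (Measure.pi fun _ => (volume : Measure ℝ))) :=
            hmp.lintegral_comp hG
        _ = (∫⁻ x, f 0 x) * ∫⁻ y : Fin n → ℝ, ∏ j, f (Fin.succ j) (y j)
              ∂(Measure.pi fun _ => (volume : Measure ℝ)) :=
            lintegral_prod_mul (hf 0).aemeasurable
              (Finset.measurable_prod _ fun j _ =>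
                (hf _).comp (measurable_pi_apply j)).aemeasurable
        _ = ∏ i, ∫⁻ x, f i x := by
            rw [ih _ fun j => hf _, Fin.prod_univ_succ]

theorem normalVec_eq_withDensity {n : ℕ} (m : Fin n → ℝ) {v : NNReal} (hv : v ≠ 0) :
    normalVec m v = (volume : Measure (Fin n → ℝ)).withDensity
      (fun x => ∏ i, gaussianPDF (m i) v (x i)) := by
  refine Measure.pi_eq fun s hs => ?_
  rw [withDensity_apply _ (MeasurableSet.univ_pi hs)]
  have hind : ∀ x : Fin n → ℝ,
      Set.indicator (Set.pi Set.univ s) (fun x => ∏ i, gaussianPDF (m i) v (x i)) x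
        = ∏ i, Set.indicator (s i) (gaussianPDF (m i) v) (x i) := by
    intro x
    by_cases hx : x ∈ Set.pi Set.univ s
    · rw [Set.indicator_of_mem hx]
      exact Finset.prod_congr rfl fun i _ =>
        (Set.indicator_of_mem (hx i (Set.mem_univ i)) _).symm
    · rw [Set.indicator_of_notMem hx]
      obtain ⟨i, hi⟩ := not_forall.mp (Set.mem_univ_pi.not.mp hx)
      exact (Finset.prod_eq_zero (Finset.mem_univ i)
        (Set.indicator_of_notMem hi _)).symm
  calc ∫⁻ x in Set.pi Set.univ s, (∏ i, gaussianPDF (m i) v (x i)) ∂(volume)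
      = ∫⁻ x, Set.indicator (Set.pi Set.univ s)
          (fun x => ∏ i, gaussianPDF (m i) v (x i)) x ∂(volume) :=
        (lintegral_indicator (MeasurableSet.univ_pi hs) _).symm
    _ = ∫⁻ x : Fin n → ℝ, ∏ i, Set.indicator (s i) (gaussianPDF (m i) v) (x i)
          ∂(Measure.pi fun _ => (volume : Measure ℝ)) := by
        rw [← volume_pi]; exact lintegral_congr hind
    _ = ∏ i, ∫⁻ x, Set.indicator (s i) (gaussianPDF (m i) v) x :=
        lintegral_pi_fin _ fun i => (measurable_gaussianPDF _ _).indicator (hs i)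
    _ = ∏ i, gaussianReal (m i) v (s i) := by
        refine Finset.prod_congr rfl fun i _ => ?_
        rw [lintegral_indicator (hs i), gaussianReal_apply _ hv]

lemma enorm'_nonneg {k : ℕ} (v : Fin k → ℝ) : 0 ≤ enorm' v := Real.sqrt_nonneg _

lemma enorm'_sq {k : ℕ} (v : Fin k → ℝ) : enorm' v ^ 2 = ∑ i, v i ^ 2 :=
  Real.sq_sqrt (Finset.sum_nonneg fun i _ => sq_nonneg _)

lemma enorm'_dot {k : ℕ} (v : Fin k → ℝ) : v ⬝ᵥ v = enorm' v ^ 2 := by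
  rw [enorm'_sq, dotProduct]; exact Finset.sum_congr rfl fun i _ => (sq (v i)).symm

lemma enorm'_smul {k : ℕ} (a : ℝ) (v : Fin k → ℝ) : enorm' (a • v) = |a| * enorm' v := by
  unfold enorm'
  rw [← Real.sqrt_sq_eq_abs, ← Real.sqrt_mul (sq_nonneg a), Finset.mul_sum]
  congr 1; exact Finset.sum_congr rfl fun i _ => by simp [mul_pow]

lemma enorm'_pos {k : ℕ} {v : Fin k → ℝ} (hv : v ≠ 0) : 0 < enorm' v := by
  rcases Function.ne_iff.mp hv with ⟨i, hi⟩
  refine Real.sqrt_pos.mpr ?_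
  exact Finset.sum_pos' (fun j _ => sq_nonneg _)
    ⟨i, Finset.mem_univ i, pow_pos (abs_pos.mpr hi) 2 |>.trans_eq (sq_abs _)⟩

/-- From a lower bound on `sMin`, a lower bound on `‖Xv‖` for all `v`. -/
lemma le_mulVec_of_le_sMin {n k : ℕ} {X : Matrix (Fin n) (Fin k) ℝ} {c : ℝ}
    (hc : 0 ≤ c) (h : c ≤ sMin X) (v : Fin k → ℝ) :
    c * enorm' v ≤ enorm' (X.mulVec v) := by
  rcases eq_or_ne v 0 with rfl | hv
  · simp [enorm', Matrix.mulVec_zero]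
  · have hpos := enorm'_pos hv
    have hu : enorm' ((enorm' v)⁻¹ • v) = 1 := by
      rw [enorm'_smul, abs_of_pos (by positivity), inv_mul_cancel₀ hpos.ne']
    have hmem : enorm' (X.mulVec ((enorm' v)⁻¹ • v))
        ∈ (fun v => enorm' (X.mulVec v)) '' {v | enorm' v = 1} :=
      Set.mem_image_of_mem _ hu
    have hbdd : BddBelow ((fun v => enorm' (X.mulVec v)) '' {v | enorm' v = 1}) :=
      ⟨0, fun x ⟨w, _, hw⟩ => hw ▸ enorm'_nonneg _⟩
    have h1 : sMin X ≤ enorm' (X.mulVec ((enorm' v)⁻¹ • v)) := csInf_le hbdd hmem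
    have h2 : X.mulVec ((enorm' v)⁻¹ • v) = (enorm' v)⁻¹ • X.mulVec v := by
      rw [Matrix.mulVec_smul]
    rw [h2, enorm'_smul, abs_of_pos (by positivity)] at h1
    have := (le_trans h h1)
    calc c * enorm' v ≤ ((enorm' v)⁻¹ * enorm' (X.mulVec v)) * enorm' v :=
          mul_le_mul_of_nonneg_right this hpos.le
      _ = enorm' (X.mulVec v) := by field_simp

section LinAlg
variable {n k : ℕ} {X : Matrix (Fin n) (Fin k) ℝ} {c : ℝ}

/-- Quadratic form lower bound for `A = Xᵀ X`. -/
lemma quad_lower (hc : 0 ≤ c) (h : ∀ v, c * enorm' v ≤ enorm' (X.mulVec v))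
    (u : Fin k → ℝ) : c ^ 2 * (u ⬝ᵥ u) ≤ u ⬝ᵥ (X.transpose * X).mulVec u := by
  have key : u ⬝ᵥ (X.transpose * X).mulVec u = (X.mulVec u) ⬝ᵥ (X.mulVec u) := by
    rw [← Matrix.mulVec_mulVec, Matrix.dotProduct_mulVec, Matrix.vecMul_transpose]
  rw [key, enorm'_dot, enorm'_dot, ← mul_pow]
  exact pow_le_pow_left₀ (mul_nonneg hc (enorm'_nonneg _)) (h u) 2

lemma A_posdef (hc : 0 < c) (h : ∀ v, c * enorm' v ≤ enorm' (X.mulVec v)) :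
    (X.transpose * X).PosDef := by
  refine Matrix.PosDef.of_dotProduct_mulVec_pos (by simpa using Matrix.isHermitian_conjTranspose_mul_self X) fun u hu => ?_
  have h1 := quad_lower hc.le h u
  have h2 : 0 < c ^ 2 * (u ⬝ᵥ u) := by
    rw [enorm'_dot]
    exact mul_pos (pow_pos hc 2) (pow_pos (enorm'_pos hu) 2)
  simpa using lt_of_lt_of_le h2 h1

lemma A_inv_mul (hc : 0 < c) (h : ∀ v, c * enorm' v ≤ enorm' (X.mulVec v)) :
    (X.transpose * X)⁻¹ * (X.transpose * X) = 1 :=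
  Matrix.nonsing_inv_mul _ (A_posdef hc h).det_pos.ne'.isUnit

lemma A_mul_inv (hc : 0 < c) (h : ∀ v, c * enorm' v ≤ enorm' (X.mulVec v)) :
    (X.transpose * X) * (X.transpose * X)⁻¹ = 1 :=
  Matrix.mul_nonsing_inv _ (A_posdef hc h).det_pos.ne'.isUnit

lemma A_inv_symm (hc : 0 < c) (h : ∀ v, c * enorm' v ≤ enorm' (X.mulVec v)) :
    (X.transpose * X)⁻¹.transpose = (X.transpose * X)⁻¹ := by
  rw [Matrix.transpose_nonsing_inv, Matrix.transpose_mul, Matrix.transpose_transpose]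

end LinAlg

section Proj
variable {n k : ℕ} {X : Matrix (Fin n) (Fin k) ℝ} {c : ℝ}
  (hc : 0 < c) (h : ∀ v, c * enorm' v ≤ enorm' (X.mulVec v))

/-- The hat matrix. -/
noncomputable def hatM (X : Matrix (Fin n) (Fin k) ℝ) : Matrix (Fin n) (Fin n) ℝ :=
  X * ((X.transpose * X)⁻¹ * X.transpose)

include hc h

lemma hatM_symm : (hatM X).transpose = hatM X := by
  unfold hatM
  rw [Matrix.transpose_mul, Matrix.transpose_mul, Matrix.transpose_transpose,
    A_inv_symm hc h, Matrix.mul_assoc]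

lemma hatM_idem : hatM X * hatM X = hatM X := by
  unfold hatM
  have : X * ((X.transpose * X)⁻¹ * X.transpose) * (X * ((X.transpose * X)⁻¹ * X.transpose))
      = X * (((X.transpose * X)⁻¹ * (X.transpose * X)) * ((X.transpose * X)⁻¹ * X.transpose)) := by
    simp only [Matrix.mul_assoc]
  rw [this, A_inv_mul hc h, Matrix.one_mul]

lemma hatM_det : (1 + hatM X).det = 2 ^ k := by
  unfold hatM
  rw [Matrix.det_one_add_mul_comm, Matrix.mul_assoc, A_inv_mul hc h]
  rw [show (1 + 1 : Matrix (Fin k) (Fin k) ℝ) = Matrix.diagonal (fun _ => 2) by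
    rw [← Matrix.diagonal_one, Matrix.diagonal_add]; norm_num, Matrix.det_diagonal]
  simp

end Proj

section Event
variable {n k : ℕ} {X : Matrix (Fin n) (Fin k) ℝ} {c : ℝ}
  (hc : 0 < c) (h : ∀ v, c * enorm' v ≤ enorm' (X.mulVec v))

include hc h

lemma event_quad_bound (β0 : Fin k → ℝ) {ε : ℝ} (hε : 0 < ε) (y : Fin n → ℝ)
    (hy : ε / 2 < enorm' (betaHat X y - β0)) :
    c ^ 2 * (ε / 2) ^ 2 ≤ (y - X.mulVec β0) ⬝ᵥ (hatM X).mulVec (y - X.mulVec β0) := by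
  set z := y - X.mulVec β0 with hz
  set u := (X.transpose * X)⁻¹.mulVec (X.transpose.mulVec z) with hu
  have hβ : (X.transpose * X)⁻¹.mulVec (X.transpose.mulVec (X.mulVec β0)) = β0 := by
    rw [Matrix.mulVec_mulVec, Matrix.mulVec_mulVec, Matrix.mul_assoc, A_inv_mul hc h, Matrix.one_mulVec]
  have h1 : betaHat X y - β0 = u := by
    rw [hu, hz, Matrix.mulVec_sub, Matrix.mulVec_sub, hβ, betaHat]
  have h2 : z ⬝ᵥ (hatM X).mulVec z = u ⬝ᵥ (X.transpose * X).mulVec u := by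
    have hMz : (hatM X).mulVec z = X.mulVec u := by
      unfold hatM
      rw [← Matrix.mulVec_mulVec, ← Matrix.mulVec_mulVec]
    have hw : (X.transpose * X).mulVec u = X.transpose.mulVec z := by
      rw [hu, Matrix.mulVec_mulVec, A_mul_inv hc h, Matrix.one_mulVec]
    rw [hMz, Matrix.dotProduct_mulVec, ← Matrix.mulVec_transpose, ← hw,
      dotProduct_comm]
  rw [h2]
  refine le_trans ?_ (quad_lower hc.le h u)
  have h3 : (ε / 2) ^ 2 ≤ enorm' u ^ 2 :=
    pow_le_pow_left₀ (by positivity) (h1 ▸ hy.le) 2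
  rw [enorm'_dot]
  exact mul_le_mul_of_nonneg_left h3 (by positivity)

end Event

section CoreA
variable {n k : ℕ} {X : Matrix (Fin n) (Fin k) ℝ}

lemma prod_pdf {σ2 : NNReal} (x : Fin n → ℝ) :
    ∏ i, gaussianPDFReal 0 σ2 (x i)
      = (Real.sqrt (2 * π * σ2))⁻¹ ^ n * Real.exp (-(x ⬝ᵥ x) / (2 * σ2)) := by
  simp only [gaussianPDFReal, sub_zero]
  rw [Finset.prod_mul_distrib, Finset.prod_const, Finset.card_univ, Fintype.card_fin,
    ← Real.exp_sum]
  congr 1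
  rw [← Finset.sum_div, dotProduct, ← Finset.sum_neg_distrib]
  exact congrArg Real.exp (congrArg (fun t => t / (2 * (σ2:ℝ))) (Finset.sum_congr rfl fun i _ => by rw [sq]))

theorem Ieq (hsymm : (hatM X).transpose = hatM X)
    (hidem : hatM X * hatM X = hatM X) (hdet : (1 + hatM X).det = 2 ^ k)
    (m : Fin n → ℝ) {σ2 : NNReal} (hσ2 : 0 < (σ2 : ℝ)) :
    ∫⁻ y, ENNReal.ofReal (Real.exp ((3 / (8 * (σ2:ℝ))) * ((y - m) ⬝ᵥ (hatM X).mulVec (y - m))))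
      ∂(normalVec m σ2) = ENNReal.ofReal (2 ^ k) := by
  set P := hatM X with hP
  set lam : ℝ := 3 / (8 * σ2) with hlam
  have hσ2ne : σ2 ≠ 0 := fun h => by simp [h] at hσ2
  set G : (Fin n → ℝ) → ℝ := fun z =>
    Real.exp (lam * (z ⬝ᵥ P.mulVec z)) * ∏ i, gaussianPDFReal 0 σ2 (z i) with hG
  -- measurability
  have hqm : Measurable fun z : Fin n → ℝ => z ⬝ᵥ P.mulVec z := by
    unfold dotProduct Matrix.mulVec
    exact Finset.measurable_sum _ fun i _ => (measurable_pi_apply i).mul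
      (Finset.measurable_sum _ fun j _ => ((measurable_pi_apply j).const_mul _))
  have hpdfm : Measurable fun z : Fin n → ℝ => ∏ i, gaussianPDFReal 0 σ2 (z i) :=
    Finset.measurable_prod _ fun i _ =>
      (measurable_gaussianPDFReal 0 σ2).comp (measurable_pi_apply i)
  have hGm : Measurable G := ((hqm.const_mul lam).exp).mul hpdfm
  have hGnn : ∀ z : Fin n → ℝ, 0 ≤ ∏ i, gaussianPDFReal 0 σ2 (z i) :=
    fun z => Finset.prod_nonneg fun i _ => gaussianPDFReal_nonneg _ _ _
  have hsubm : Measurable fun y : Fin n → ℝ => y - m :=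
    measurable_pi_lambda _ fun i => (measurable_pi_apply i).sub measurable_const
  -- Step A+B : withDensity and pointwise shift
  have stepAB : ∫⁻ y, ENNReal.ofReal (Real.exp (lam * ((y - m) ⬝ᵥ P.mulVec (y - m))))
      ∂(normalVec m σ2) = ∫⁻ y, ENNReal.ofReal (G (y - m)) := by
    have hfm2 : Measurable fun y : Fin n → ℝ =>
        ENNReal.ofReal (Real.exp (lam * ((y - m) ⬝ᵥ P.mulVec (y - m)))) := by
      exact (((hqm.comp hsubm)).const_mul lam).exp.ennreal_ofReal
    have hDm : Measurable fun x : Fin n → ℝ => ∏ i, gaussianPDF (m i) σ2 (x i) := by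
      exact Finset.measurable_prod _ fun i _ =>
        (measurable_gaussianPDF _ _).comp (measurable_pi_apply i)
    rw [normalVec_eq_withDensity m hσ2ne, lintegral_withDensity_eq_lintegral_mul _ hDm hfm2]
    refine lintegral_congr fun y => ?_
    have hre : (∏ i, gaussianPDFReal (m i) σ2 (y i))
        * Real.exp (lam * ((y - m) ⬝ᵥ P.mulVec (y - m))) = G (y - m) := by
      rw [hG]
      dsimp only
      rw [mul_comm]
      congr 1
      exact Finset.prod_congr rfl fun i _ => by simp [gaussianPDFReal]
    simp only [Pi.mul_apply, gaussianPDF]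
    rw [← ENNReal.ofReal_prod_of_nonneg fun i _ => gaussianPDFReal_nonneg _ _ _,
      ← ENNReal.ofReal_mul (Finset.prod_nonneg fun i _ => gaussianPDFReal_nonneg _ _ _), hre]
  -- Step C : translation invariance
  have stepC : ∫⁻ y, ENNReal.ofReal (G (y - m)) = ∫⁻ z, ENNReal.ofReal (G z) := by
    have hmp : MeasurePreserving (fun z : Fin n → ℝ => z + m) volume volume :=
      measurePreserving_add_right volume m
    have hfun : Measurable fun y : Fin n → ℝ => ENNReal.ofReal (G (y - m)) := by
      exact (hGm.comp hsubm).ennreal_ofReal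
    rw [← hmp.lintegral_comp hfun]
    simp
  -- Step D : change of variables
  set T := Matrix.toLin' (1 + P) with hT
  have hdetlin : LinearMap.det T = 2 ^ k := by rw [hT, LinearMap.det_toLin', hdet]
  have hdetne : LinearMap.det T ≠ 0 := by rw [hdetlin]; positivity
  have hTmeas : Measurable (⇑T) := LinearMap.continuous_on_pi T |>.measurable
  have hCoV : ∀ (g : (Fin n → ℝ) → ENNReal), Measurable g →
      ∫⁻ z, g z = ENNReal.ofReal ((2:ℝ) ^ k) * ∫⁻ w, g (T w) := by
    intro g hg
    have h1 : ∫⁻ w, g (T w) = ∫⁻ z, g z ∂(Measure.map (⇑T) volume) :=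
      (lintegral_map hg hTmeas).symm
    rw [h1, Real.map_linearMap_volume_pi_eq_smul_volume_pi hdetne, hdetlin,
      lintegral_smul_measure, smul_eq_mul, ← mul_assoc, ← ENNReal.ofReal_mul (by positivity),
      abs_of_pos (by positivity), mul_inv_cancel₀ (by positivity), ENNReal.ofReal_one, one_mul]
  -- Step E : pointwise identity
  have stepE : ∀ w : Fin n → ℝ, G (T w) = ∏ i, gaussianPDFReal 0 σ2 (w i) := by
    intro w
    have hTw : T w = w + P.mulVec w := by
      rw [hT, Matrix.toLin'_apply, Matrix.add_mulVec, Matrix.one_mulVec]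
    set v := P.mulVec w with hv
    have hPvec : v ᵥ* P = v := by
      rw [← hsymm, Matrix.vecMul_transpose, hv, Matrix.mulVec_mulVec, hidem]
    have hvv : v ⬝ᵥ v = w ⬝ᵥ v :=
      calc v ⬝ᵥ v = v ⬝ᵥ P.mulVec w := rfl
        _ = (v ᵥ* P) ⬝ᵥ w := Matrix.dotProduct_mulVec _ _ _
        _ = v ⬝ᵥ w := by rw [hPvec]
        _ = w ⬝ᵥ v := dotProduct_comm _ _
    have hPv : P.mulVec v = v := by rw [hv, Matrix.mulVec_mulVec, hidem]
    have hq : (T w) ⬝ᵥ P.mulVec (T w) = 4 * (w ⬝ᵥ v) := by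
      rw [hTw, Matrix.mulVec_add, hPv]
      simp only [add_dotProduct, dotProduct_add, ← hv, hvv,
        dotProduct_comm v w]
      ring
    have hxx : (T w) ⬝ᵥ (T w) = w ⬝ᵥ w + 3 * (w ⬝ᵥ v) := by
      rw [hTw]
      simp only [add_dotProduct, dotProduct_add, hvv,
        dotProduct_comm v w]
      ring
    rw [hG]
    dsimp only
    rw [prod_pdf (T w), prod_pdf w, hq, hxx, mul_left_comm, ← Real.exp_add]
    congr 2
    rw [hlam]
    field_simp
    ring
  -- Step F : total mass one
  have stepF : ∫⁻ w : Fin n → ℝ, ENNReal.ofReal (∏ i, gaussianPDFReal 0 σ2 (w i)) = 1 := by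
    have hof : ∀ w : Fin n → ℝ, ENNReal.ofReal (∏ i, gaussianPDFReal 0 σ2 (w i))
        = ∏ i, gaussianPDF 0 σ2 (w i) :=
      fun w => ENNReal.ofReal_prod_of_nonneg fun i _ => gaussianPDFReal_nonneg _ _ _
    have hprob : IsProbabilityMeasure (normalVec (fun _ : Fin n => (0:ℝ)) σ2) := by
      unfold normalVec; infer_instance
    calc ∫⁻ w : Fin n → ℝ, ENNReal.ofReal (∏ i, gaussianPDFReal 0 σ2 (w i))
        = ∫⁻ w : Fin n → ℝ, ∏ i, gaussianPDF 0 σ2 (w i) := lintegral_congr hof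
      _ = (volume : Measure (Fin n → ℝ)).withDensity
            (fun x => ∏ i, gaussianPDF 0 σ2 (x i)) Set.univ := by
          rw [withDensity_apply _ MeasurableSet.univ, setLIntegral_univ]
      _ = normalVec (fun _ : Fin n => (0:ℝ)) σ2 Set.univ := by
          rw [← normalVec_eq_withDensity _ hσ2ne]
      _ = 1 := measure_univ
  -- combine
  calc ∫⁻ y, ENNReal.ofReal (Real.exp (lam * ((y - m) ⬝ᵥ P.mulVec (y - m))))
        ∂(normalVec m σ2)
      = ∫⁻ y, ENNReal.ofReal (G (y - m)) := stepAB
    _ = ∫⁻ z, ENNReal.ofReal (G z) := stepC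
    _ = ENNReal.ofReal ((2:ℝ) ^ k) * ∫⁻ w, ENNReal.ofReal (G (T w)) :=
        hCoV _ hGm.ennreal_ofReal
    _ = ENNReal.ofReal ((2:ℝ) ^ k)
          * ∫⁻ w : Fin n → ℝ, ENNReal.ofReal (∏ i, gaussianPDFReal 0 σ2 (w i)) := by
        rw [lintegral_congr fun w => congrArg ENNReal.ofReal (stepE w)]
    _ = ENNReal.ofReal (2 ^ k) := by rw [stepF, mul_one]
end CoreA

section CoreB
variable {n k : ℕ} {X : Matrix (Fin n) (Fin k) ℝ}

-- assume the two structural facts abstractly, supplied later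
theorem gauss_core' (hsymm : (hatM X).transpose = hatM X)
    (hidem : hatM X * hatM X = hatM X) (hdet : (1 + hatM X).det = 2 ^ k)
    (m : Fin n → ℝ) {σ2 : NNReal} (hσ2 : 0 < (σ2 : ℝ)) (r : ℝ) :
    normalVec m σ2 {y | r ≤ (y - m) ⬝ᵥ (hatM X).mulVec (y - m)}
      ≤ ENNReal.ofReal (2 ^ k * Real.exp (-(3 / (8 * σ2)) * r)) := by
  set P := hatM X with hP
  set lam : ℝ := 3 / (8 * σ2) with hlam
  have hlampos : 0 < lam := by positivity
  -- measurability of the quadratic form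
  have hqm : Measurable fun z : Fin n → ℝ => z ⬝ᵥ P.mulVec z := by
    unfold dotProduct Matrix.mulVec
    exact Finset.measurable_sum _ fun i _ => (measurable_pi_apply i).mul
      (Finset.measurable_sum _ fun j _ => ((measurable_pi_apply j).const_mul _))
  have hsubm : Measurable fun y : Fin n → ℝ => y - m :=
    measurable_pi_lambda _ fun i => (measurable_pi_apply i).sub measurable_const
  have hfm : Measurable fun y : Fin n → ℝ =>
      ENNReal.ofReal (Real.exp (lam * ((y - m) ⬝ᵥ P.mulVec (y - m)))) :=
    ((((hqm.comp hsubm)).const_mul lam).exp).ennreal_ofReal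
  -- Markov / Chernoff step
  have markov : ENNReal.ofReal (Real.exp (lam * r))
        * normalVec m σ2 {y | r ≤ (y - m) ⬝ᵥ P.mulVec (y - m)}
      ≤ ∫⁻ y, ENNReal.ofReal (Real.exp (lam * ((y - m) ⬝ᵥ P.mulVec (y - m))))
          ∂(normalVec m σ2) := by
    refine le_trans (mul_le_mul_right (measure_mono ?_) _)
      (mul_meas_ge_le_lintegral₀ hfm.aemeasurable _)
    intro y hy
    exact ENNReal.ofReal_le_ofReal (Real.exp_le_exp.mpr
      (mul_le_mul_of_nonneg_left hy hlampos.le))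
  -- the integral equals 2^k
  have Ieq : ∫⁻ y, ENNReal.ofReal (Real.exp (lam * ((y - m) ⬝ᵥ P.mulVec (y - m))))
      ∂(normalVec m σ2) = ENNReal.ofReal (2 ^ k) :=
    Ieq hsymm hidem hdet m hσ2
  -- conclude
  have h2k : (0:ℝ) < 2 ^ k := by positivity
  have hexp : (0:ℝ) < Real.exp (lam * r) := Real.exp_pos _
  have := le_trans markov (le_of_eq Ieq)
  calc normalVec m σ2 {y | r ≤ (y - m) ⬝ᵥ P.mulVec (y - m)}
      ≤ ENNReal.ofReal (2 ^ k) / ENNReal.ofReal (Real.exp (lam * r)) := by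
        rw [ENNReal.le_div_iff_mul_le (Or.inl (by simp [hexp.ne', ENNReal.ofReal_eq_zero, hexp.not_ge]))
          (Or.inl ENNReal.ofReal_ne_top), mul_comm]
        exact this
    _ = ENNReal.ofReal (2 ^ k * Real.exp (-(3 / (8 * σ2)) * r)) := by
        rw [neg_mul, Real.exp_neg, ← hlam, ENNReal.ofReal_mul h2k.le,
          ENNReal.div_eq_inv_mul, ← ENNReal.ofReal_inv_of_pos hexp, mul_comm]
end CoreB


lemma sMin_nonneg {n k : ℕ} (X : Matrix (Fin n) (Fin k) ℝ) : 0 ≤ sMin X := by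
  refine Real.sInf_nonneg ?_
  rintro x ⟨v, -, rfl⟩
  exact enorm'_nonneg _

/-- Under (A1) and (A2), for every `ε > 0` and all sufficiently large `n`, the type I error
of the test `Φₙ(y) = I(‖β̂ₙ - βₙ⁰‖ > ε/2)` satisfies
`E_{βₙ⁰}(Φₙ) ≤ exp(-ε² n Λmin² / (16 σ²))`, the expectation being under
`yₙ ~ N(Xₙ βₙ⁰, σ² Iₙ)`. -/
theorem stmt0
    (p : ℕ → ℕ) (X : ∀ n : ℕ, Matrix (Fin n) (Fin (p n)) ℝ)
    (β0 : ∀ n : ℕ, Fin (p n) → ℝ) (σ2 : NNReal) (hσ2 : 0 < (σ2 : ℝ))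
    (Λmin Λmax : ℝ) (hΛmin : 0 < Λmin)
    -- (A1): pₙ = o(n)
    (hA1 : (fun n : ℕ => (p n : ℝ)) =o[atTop] fun n : ℕ => (n : ℝ))
    -- (A2): Λmin < liminf Λ_{n,min}/√n ≤ limsup Λ_{n,max}/√n < Λmax
    (hA2₁ : Λmin < atTop.liminf fun n : ℕ => sMin (X n) / Real.sqrt n)
    (hA2₂ : (atTop.liminf fun n : ℕ => sMin (X n) / Real.sqrt n)
              ≤ atTop.limsup fun n : ℕ => sMax (X n) / Real.sqrt n)
    (hA2₃ : (atTop.limsup fun n : ℕ => sMax (X n) / Real.sqrt n) < Λmax)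
    (ε : ℝ) (hε : 0 < ε) :
    ∀ᶠ n in atTop,
      normalVec ((X n).mulVec (β0 n)) σ2
          {y | enorm' (betaHat (X n) y - β0 n) > ε / 2}
        ≤ ENNReal.ofReal (Real.exp (-(ε ^ 2 * n * Λmin ^ 2) / (16 * σ2))) := by
  have hbdd : IsBoundedUnder (· ≥ ·) atTop (fun n : ℕ => sMin (X n) / Real.sqrt n) :=
    isBoundedUnder_of ⟨0, fun n => div_nonneg (sMin_nonneg _) (Real.sqrt_nonneg _)⟩
  have hev1 : ∀ᶠ n : ℕ in atTop, Λmin < sMin (X n) / Real.sqrt n :=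
    eventually_lt_of_lt_liminf hA2₁ hbdd
  have hlog2 : (0:ℝ) < Real.log 2 := Real.log_pos one_lt_two
  set δ : ℝ := ε ^ 2 * Λmin ^ 2 / (32 * σ2 * Real.log 2) with hδ
  have hδpos : 0 < δ := by positivity
  have hev2 := hA1.def hδpos
  filter_upwards [hev1, hev2, eventually_ge_atTop 1] with n h1 h2 h3
  have hn1 : (1:ℝ) ≤ (n:ℝ) := by exact_mod_cast h3
  have hsqpos : 0 < Real.sqrt n := Real.sqrt_pos.mpr (by linarith)
  set c : ℝ := Λmin * Real.sqrt n with hc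
  have hcpos : 0 < c := mul_pos hΛmin hsqpos
  have hsmin : c ≤ sMin (X n) := le_of_lt ((lt_div_iff₀ hsqpos).mp h1)
  have hXlb : ∀ v, c * enorm' v ≤ enorm' ((X n).mulVec v) :=
    le_mulVec_of_le_sMin hcpos.le hsmin
  have hsub : {y | enorm' (betaHat (X n) y - β0 n) > ε / 2} ⊆
      {y | c ^ 2 * (ε / 2) ^ 2
        ≤ (y - (X n).mulVec (β0 n)) ⬝ᵥ (hatM (X n)).mulVec (y - (X n).mulVec (β0 n))} :=
    fun y hy => event_quad_bound hcpos hXlb (β0 n) hε y hy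
  refine le_trans (measure_mono hsub) (le_trans (gauss_core' (hatM_symm hcpos hXlb)
    (hatM_idem hcpos hXlb) (hatM_det hcpos hXlb) _ hσ2 _) (ENNReal.ofReal_le_ofReal ?_))
  -- real-number estimate
  have hsq : Real.sqrt n ^ 2 = n := Real.sq_sqrt (by positivity)
  have hc2 : c ^ 2 = Λmin ^ 2 * n := by rw [hc, mul_pow, hsq]
  have hpn : (p n : ℝ) ≤ δ * n := by
    have := h2
    simp only [Real.norm_natCast, Real.norm_eq_abs] at this
    calc (p n : ℝ) ≤ δ * |(n:ℝ)| := by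
          simpa using this
      _ = δ * n := by rw [abs_of_nonneg (by positivity)]
  have key : (p n : ℝ) * Real.log 2 ≤ ε ^ 2 * Λmin ^ 2 * n / (32 * σ2) := by
    have hδl : δ * Real.log 2 = ε ^ 2 * Λmin ^ 2 / (32 * σ2) := by
      rw [hδ]; field_simp
    calc (p n : ℝ) * Real.log 2 ≤ (δ * n) * Real.log 2 :=
          mul_le_mul_of_nonneg_right hpn hlog2.le
      _ = ε ^ 2 * Λmin ^ 2 * n / (32 * σ2) := by
          rw [mul_right_comm, hδl]; ring
  have h2p : (2:ℝ) ^ (p n) = Real.exp ((p n) * Real.log 2) := by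
    rw [← Real.exp_log (show (0:ℝ) < 2 by norm_num), ← Real.exp_nat_mul, Real.exp_log]
    norm_num
  rw [h2p, ← Real.exp_add]
  apply Real.exp_le_exp.mpr
  rw [hc2]
  have e1 : -(3 / (8 * (σ2:ℝ))) * (Λmin ^ 2 * n * (ε / 2) ^ 2)
      = -(3 * (ε ^ 2 * Λmin ^ 2 * n / (32 * σ2))) := by
    field_simp; ring
  have e2 : -(ε ^ 2 * n * Λmin ^ 2) / (16 * (σ2:ℝ))
      = -(2 * (ε ^ 2 * Λmin ^ 2 * n / (32 * σ2))) := by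
    field_simp; ring
  rw [e1, e2]
  linarith [key]
end

section
/- If χ²_p is a chi-squared random variable with p degrees of freedom and x ≥ 8p, then pr(χ²_p ≥ x) ≤ exp(−x/4). -/
open MeasureTheory ProbabilityTheory

/-- The chi-squared distribution with `p` degrees of freedom, i.e. the Gamma distribution
with shape `p/2` and rate `1/2`. -/
noncomputable def chiSq (p : ℕ) : Measure ℝ := gammaMeasure ((p : ℝ) / 2) (1 / 2)

/-- If `χ²_p` is a chi-squared random variable with `p ≥ 1` degrees of freedom and
`x ≥ 8p`, then `pr(χ²_p ≥ x) ≤ exp(-x/4)`. -/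
theorem stmt7 (p : ℕ) (hp : 1 ≤ p) (x : ℝ) (hx : 8 * p ≤ x) :
    chiSq p {y | y ≥ x} ≤ ENNReal.ofReal (Real.exp (-x / 4)) := by
  have hp1 : (1:ℝ) ≤ p := by exact_mod_cast hp
  have hx8 : (8:ℝ) ≤ x := by nlinarith
  set a : ℝ := (p:ℝ) / 2 with hadef
  have ha : 0 < a := by positivity
  have hΓ : 0 < Real.Gamma a := Real.Gamma_pos_of_pos ha
  set C : ℝ := (1/2:ℝ) ^ a / Real.Gamma a with hCdef
  have hC0 : 0 ≤ C := by positivity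
  have hset : {y : ℝ | y ≥ x} = Set.Ici x := rfl
  rw [chiSq, gammaMeasure, hset, withDensity_apply _ measurableSet_Ici]
  -- the dominating function
  have hmeas : Measurable fun y : ℝ =>
      ENNReal.ofReal (Real.exp (-(3*x/8))) * ENNReal.ofReal (C * y ^ (a-1) * Real.exp (-(1/8 * y))) := by
    apply Measurable.const_mul
    apply Measurable.ennreal_ofReal
    exact (((measurable_id'.pow_const _).const_mul _).mul ((measurable_id.const_mul _).neg.exp))
  have hpt : ∀ y ∈ Set.Ici x, gammaPDF a (1/2) y ≤
      ENNReal.ofReal (Real.exp (-(3*x/8))) * ENNReal.ofReal (C * y ^ (a-1) * Real.exp (-(1/8 * y))) := by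
    intro y hy
    have hy0 : (0:ℝ) ≤ y := le_trans (by linarith) hy
    rw [gammaPDF_of_nonneg hy0, ← ENNReal.ofReal_mul (Real.exp_nonneg _)]
    apply ENNReal.ofReal_le_ofReal
    have key : C * y ^ (a-1) * Real.exp (-(1/2 * y)) ≤
        (C * y ^ (a-1) * Real.exp (-(1/8 * y))) * Real.exp (-(3*x/8)) := by
      rw [show -(1/2 * y) = -(1/8 * y) + -(3*y/8) by ring, Real.exp_add, ← mul_assoc]
      have hyexp : Real.exp (-(3*y/8)) ≤ Real.exp (-(3*x/8)) :=
        Real.exp_le_exp.2 (by have := hy; simp only [Set.mem_Ici] at hy; linarith)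
      have h0 : 0 ≤ C * y ^ (a-1) * Real.exp (-(1/8 * y)) := by positivity
      exact mul_le_mul_of_nonneg_left hyexp h0
    calc (1/2:ℝ) ^ a / Real.Gamma a * y ^ (a-1) * Real.exp (-(1/2 * y))
        = C * y ^ (a-1) * Real.exp (-(1/2 * y)) := by rw [hCdef]
      _ ≤ (C * y ^ (a-1) * Real.exp (-(1/8 * y))) * Real.exp (-(3*x/8)) := key
      _ = Real.exp (-(3*x/8)) * (C * y ^ (a-1) * Real.exp (-(1/8 * y))) := by ring
  -- integrability of the dominating function
  have hint : IntegrableOn (fun y : ℝ => C * (y ^ (a-1) * Real.exp (-(1/8 * y)))) (Set.Ioi 0) := by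
    apply Integrable.const_mul
    have := integrableOn_rpow_mul_exp_neg_mul_rpow (s := a - 1) (p := 1) (b := 1/8)
      (by linarith) zero_lt_one (by norm_num)
    refine this.congr_fun (fun y hy => ?_) measurableSet_Ioi
    beta_reduce
    rw [Real.rpow_one]
    ring_nf
  calc ∫⁻ y in Set.Ici x, gammaPDF a (1/2) y
      ≤ ∫⁻ y in Set.Ici x, ENNReal.ofReal (Real.exp (-(3*x/8))) *
          ENNReal.ofReal (C * y ^ (a-1) * Real.exp (-(1/8 * y))) :=
        setLIntegral_mono hmeas hpt
    _ ≤ ∫⁻ y in Set.Ioi 0, ENNReal.ofReal (Real.exp (-(3*x/8))) *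
          ENNReal.ofReal (C * y ^ (a-1) * Real.exp (-(1/8 * y))) :=
        lintegral_mono_set (fun y hy => lt_of_lt_of_le (by linarith : (0:ℝ) < x) hy)
    _ = ENNReal.ofReal (Real.exp (-(3*x/8))) *
          ∫⁻ y in Set.Ioi 0, ENNReal.ofReal (C * (y ^ (a-1) * Real.exp (-(1/8 * y)))) := by
        rw [lintegral_const_mul' _ _ ENNReal.ofReal_ne_top]
        congr 1
        apply lintegral_congr
        intro y; rw [mul_assoc]
    _ = ENNReal.ofReal (Real.exp (-(3*x/8))) *
          ENNReal.ofReal (∫ y in Set.Ioi 0, C * (y ^ (a-1) * Real.exp (-(1/8 * y)))) := by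
        rw [← ofReal_integral_eq_lintegral_ofReal hint]
        filter_upwards [self_mem_ae_restrict measurableSet_Ioi] with y hy
        have : (0:ℝ) < y := hy
        positivity
    _ = ENNReal.ofReal (Real.exp (-(3*x/8))) * ENNReal.ofReal ((4:ℝ) ^ a) := by
        congr 1
        rw [integral_const_mul, Real.integral_rpow_mul_exp_neg_mul_Ioi ha (by norm_num : (0:ℝ) < 1/8)]
        rw [hCdef, show ((1:ℝ)/(1/8)) = 8 by norm_num,
          show (1/2:ℝ)^a / Real.Gamma a * ((8:ℝ)^a * Real.Gamma a) = (1/2:ℝ)^a * 8^a by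
            field_simp,
          ← Real.mul_rpow (by norm_num) (by norm_num), show (1/2 * 8 : ℝ) = 4 by norm_num]
    _ ≤ ENNReal.ofReal (Real.exp (-x/4)) := by
        rw [← ENNReal.ofReal_mul (Real.exp_nonneg _)]
        apply ENNReal.ofReal_le_ofReal
        rw [show (4:ℝ) ^ a = Real.exp (a * Real.log 4) by
          rw [Real.rpow_def_of_pos (by norm_num)]; ring_nf]
        rw [← Real.exp_add]
        apply Real.exp_le_exp.2
        have hlog4 : Real.log 4 = 2 * Real.log 2 := by
          rw [show (4:ℝ) = 2^2 by norm_num, Real.log_pow]; push_cast; ring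
        have hlog2 : Real.log 2 < 1 := by
          have := Real.log_two_lt_d9; linarith
        have hlog2' : 0 < Real.log 2 := Real.log_pos (by norm_num)
        rw [hlog4, hadef]
        nlinarith [hp1, hx]
end
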